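/- On the two-point space with μ_∧ := min(μ(0), μ(1)), the optimal warm-up time for the interweaving between L = λ(μ − Id) and the isospectral generator with uniform invariant measure is t₀ = ln(1/μ_∧ − 1); i.e., with ε₀ = √(μ_∧/(1−μ_∧)), one has Λ̃_{ε₀} Λ_{ε₀} = exp(t₀ L) where Λ_{ε₀} and Λ̃_{ε₀} are the Markov kernels fixing 1 and scaling the nonconstant eigenfunctions by ε₀. -/

import Mathlib

open Matrix

section ExpIdem
open Nat

lemma exp_smul_idem (P : Matrix (Fin 2) (Fin 2) ℝ) (hP : P * P = P) (s : ℝ) :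
    NormedSpace.exp (s • P) = 1 + (Real.exp s - 1) • P := by
  letI : SeminormedRing (Matrix (Fin 2) (Fin 2) ℝ) := Matrix.linftyOpSemiNormedRing
  letI : NormedRing (Matrix (Fin 2) (Fin 2) ℝ) := Matrix.linftyOpNormedRing
  letI : NormedAlgebra ℝ (Matrix (Fin 2) (Fin 2) ℝ) := Matrix.linftyOpNormedAlgebra
  have hPn : ∀ n : ℕ, P ^ (n + 1) = P := by
    intro n
    induction n with
    | zero => simp
    | succ n ih => rw [pow_succ, ih, hP]
  have hsum : Summable fun n : ℕ => ((n ! : ℝ)⁻¹) • (s • P) ^ n :=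
    NormedSpace.expSeries_summable' (𝕂 := ℝ) (s • P)
  rw [NormedSpace.exp_eq_tsum ℝ]
  dsimp only
  rw [Summable.tsum_eq_zero_add hsum]
  have h0 : ((0! : ℝ)⁻¹) • (s • P) ^ 0 = 1 := by simp
  rw [h0]
  congr 1
  have hterm : ∀ n : ℕ, (((n+1)! : ℝ)⁻¹) • (s • P) ^ (n+1)
      = (s ^ (n+1) / (n+1)!) • P := by
    intro n
    rw [smul_pow, hPn, smul_smul]
    congr 1
    field_simp
  simp_rw [hterm]
  have hsre : Summable fun n : ℕ => s ^ (n+1) / ((n+1)! : ℝ) :=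
    (Real.summable_pow_div_factorial s).comp_injective (add_left_injective 1)
  rw [Summable.tsum_smul_const hsre]
  congr 1
  have hre : Real.exp s = ∑' n : ℕ, s ^ n / n ! := by
    rw [Real.exp_eq_exp_ℝ, NormedSpace.exp_eq_tsum_div]
  have hsumre : Summable fun n : ℕ => s ^ n / (n ! : ℝ) := Real.summable_pow_div_factorial s
  rw [hre, Summable.tsum_eq_zero_add hsumre]
  simp

end ExpIdem


set_option maxHeartbeats 1000000 in
/-- On the two-point space `{0,1}` (here `Fin 2`), with `λ = 1`,
`L = μ - Id` the generator with invariant probability `μ` (positive weights), `μ'` the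
uniform measure, `μ_∧ = min (μ 0) (μ 1)`, `ε₀ = √(μ_∧/(1-μ_∧))` and
`t₀ = ln(1/μ_∧ - 1)`, the composition `Λ'_{ε₀} Λ_{ε₀}` of the Markov kernels `Λ_{ε₀}`
(fixing `𝟙` and sending `φ' = (1,-1)` to `ε₀ φ`) and `Λ'_{ε₀}` (fixing `𝟙` and sending
`φ = (l, -1/l)` to `ε₀ φ'`) equals `exp (t₀ L)`. -/
theorem twoPoint_warmup_time
    (μ : Fin 2 → ℝ) (hμ0 : 0 < μ 0) (hμ1 : 0 < μ 1) (hμ : μ 0 + μ 1 = 1)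
    (l : ℝ) (hl : l = Real.sqrt (μ 1 / μ 0))
    (φ φ' : Fin 2 → ℝ) (hφ : φ = ![l, -(1 / l)]) (hφ' : φ' = ![1, -1])
    (μmin : ℝ) (hmin : μmin = min (μ 0) (μ 1))
    (ε₀ : ℝ) (hε₀ : ε₀ = Real.sqrt (μmin / (1 - μmin)))
    (t₀ : ℝ) (ht₀ : t₀ = Real.log (1 / μmin - 1))
    -- the generator `L = μ - Id` (with `λ = 1`)
    (L : Matrix (Fin 2) (Fin 2) ℝ) (hL : L = Matrix.of fun i j => μ j - (if i = j then (1:ℝ) else 0))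
    -- the Markov kernels `Λ_{ε₀}` and `Λ'_{ε₀}`, acting on functions by `mulVec`
    (A B : Matrix (Fin 2) (Fin 2) ℝ)
    (hA1 : A.mulVec (fun _ => 1) = fun _ => 1) (hAφ : A.mulVec φ' = ε₀ • φ)
    (hB1 : B.mulVec (fun _ => 1) = fun _ => 1) (hBφ : B.mulVec φ = ε₀ • φ')
    (hAmarkov : ∀ i j, 0 ≤ A i j) (hBmarkov : ∀ i j, 0 ≤ B i j) :
    A * B = NormedSpace.exp (t₀ • L) := by
  subst hφ hφ'
  have hl0 : 0 < l := by rw [hl]; exact Real.sqrt_pos.mpr (div_pos hμ1 hμ0)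
  have hne : l ≠ 0 := ne_of_gt hl0
  have hl2 : l ^ 2 = μ 1 / μ 0 := by
    rw [hl, Real.sq_sqrt (le_of_lt (div_pos hμ1 hμ0))]
  have h2 : μ 0 * l ^ 2 = μ 1 := by rw [hl2]; field_simp
  have hm0 : 0 < μmin := by rw [hmin]; exact lt_min hμ0 hμ1
  have hm1 : μmin < 1 := by
    rw [hmin]
    calc min (μ 0) (μ 1) ≤ μ 0 := min_le_left _ _
      _ < 1 := by linarith
  have hε2 : ε₀ ^ 2 = μmin / (1 - μmin) := by
    rw [hε₀, Real.sq_sqrt (div_nonneg hm0.le (by linarith))]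
  have hexp : Real.exp (-t₀) = ε₀ ^ 2 := by
    rw [ht₀, Real.exp_neg, Real.exp_log (by rw [sub_pos, lt_div_iff₀ hm0, one_mul]; exact hm1), hε2]
    rw [one_div, inv_eq_iff_eq_inv]
    field_simp
  -- the idempotent -L
  have hP : (-L) * (-L) = -L := by
    subst hL
    ext i j
    simp only [Matrix.neg_apply, Matrix.mul_apply, Fin.sum_univ_two, Matrix.of_apply]
    fin_cases i <;> fin_cases j <;> simp <;> nlinarith [hμ]
  have hsmul : t₀ • L = (-t₀) • (-L) := by simp
  have hExp : NormedSpace.exp (t₀ • L) = 1 + (1 - ε₀ ^ 2) • L := by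
    rw [hsmul, exp_smul_idem _ hP, hexp, smul_neg]
    congr 1
    rw [← neg_smul]
    congr 1
    ring
  rw [hExp]
  -- scalar equations
  have hA0 := congrFun hA1 0
  have hA1' := congrFun hA1 1
  have hAφ0 := congrFun hAφ 0
  have hAφ1 := congrFun hAφ 1
  have hB0 := congrFun hB1 0
  have hB1' := congrFun hB1 1
  have hBφ0 := congrFun hBφ 0
  have hBφ1 := congrFun hBφ 1
  simp [Matrix.mulVec, dotProduct, Fin.sum_univ_two] at hA0 hA1' hAφ0 hAφ1 hB0 hB1' hBφ0 hBφ1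
  -- solve A entries
  have hA00 : A 0 0 = (1 + ε₀ * l) / 2 := by linarith
  have hA01 : A 0 1 = (1 - ε₀ * l) / 2 := by linarith
  have hA10 : A 1 0 = (1 - ε₀ * l⁻¹) / 2 := by linarith
  have hA11 : A 1 1 = (1 + ε₀ * l⁻¹) / 2 := by linarith
  -- solve B entries
  have h1 : μ 0 * (l ^ 2 + 1) = 1 := by rw [mul_add, h2, mul_one]; linarith
  have hB00 : B 0 0 = μ 0 * (1 + ε₀ * l) := by
    have e1 : B 0 0 * (l ^ 2 + 1) = ε₀ * l + 1 := by
      linear_combination l * hBφ0 + hB0 + B 0 1 * inv_mul_cancel₀ hne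
    calc B 0 0 = B 0 0 * (μ 0 * (l ^ 2 + 1)) := by rw [h1, mul_one]
      _ = μ 0 * (B 0 0 * (l ^ 2 + 1)) := by ring
      _ = μ 0 * (1 + ε₀ * l) := by rw [e1]; ring
  have hB01 : B 0 1 = 1 - μ 0 * (1 + ε₀ * l) := by rw [← hB00]; linarith
  have hB10 : B 1 0 = μ 0 * (1 - ε₀ * l) := by
    have e1 : B 1 0 * (l ^ 2 + 1) = 1 - ε₀ * l := by
      linear_combination l * hBφ1 + hB1' + B 1 1 * inv_mul_cancel₀ hne
    calc B 1 0 = B 1 0 * (μ 0 * (l ^ 2 + 1)) := by rw [h1, mul_one]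
      _ = μ 0 * (B 1 0 * (l ^ 2 + 1)) := by ring
      _ = μ 0 * (1 - ε₀ * l) := by rw [e1]
  have hB11 : B 1 1 = 1 - μ 0 * (1 - ε₀ * l) := by rw [← hB10]; linarith
  -- conclude entrywise
  subst hL
  ext i j
  fin_cases i <;> fin_cases j <;>
    simp only [Matrix.mul_apply, Fin.sum_univ_two, Matrix.add_apply, Matrix.smul_apply,
      Matrix.of_apply, Matrix.one_apply, smul_eq_mul, Fin.zero_eta, Fin.mk_one,
      hA00, hA01, hA10, hA11, hB00, hB01, hB10, hB11] <;>
    norm_num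
  · linear_combination ε₀^2 * h2 + ε₀^2 * hμ
  · linear_combination -hμ - ε₀^2 * h2
  · linear_combination (-(μ 0) * ε₀^2) * mul_inv_cancel₀ hne
  · linear_combination (ε₀^2 - 1) * hμ + μ 0 * ε₀^2 * mul_inv_cancel₀ hne
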